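/- With notation as in Lemma 2.1 and R² the constant curvature +1 tensor, the Jacobi operator satisfies J(T_1) = 0 while J(U_1 - V_1) ≠ 0; since g(T_1,T_1) = g(U_1-V_1, U_1-V_1) = -1, both are unit timelike vectors but their Jacobi operators have different Jordan normal forms. Hence R is not timelike Jordan Osserman. -/
import Mathlib


open scoped BigOperators

/-- Basis of `ℝ^{3s}`: `(0, a) = U_a`, `(1, a) = V_a`, `(2, a) = T_a`. -/
abbrev BasisIdx (s : ℕ) := Fin 3 × Fin s

/-- The basis vectors `U_a`, `V_a`, `T_a` of `ℝ^{3s}`. -/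
def Uvec {s : ℕ} (a : Fin s) : BasisIdx s → ℝ := Pi.single ((0 : Fin 3), a) 1
def Vvec {s : ℕ} (a : Fin s) : BasisIdx s → ℝ := Pi.single ((1 : Fin 3), a) 1
def Tvec {s : ℕ} (a : Fin s) : BasisIdx s → ℝ := Pi.single ((2 : Fin 3), a) 1

/-- Components of the metric of Lemma 2.1: `g(U_a,U_b) = g_{ab}`,
`g(U_a,V_b) = g(V_b,U_a) = δ_{ab}`, `g(T_a,T_b) = -δ_{ab}`, all else zero. -/
def Gmat {s : ℕ} (gm : Fin s → Fin s → ℝ) : BasisIdx s → BasisIdx s → ℝ :=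
  fun x y =>
    if x.1 = 0 ∧ y.1 = 0 then gm x.2 y.2
    else if (x.1 = 0 ∧ y.1 = 1) ∨ (x.1 = 1 ∧ y.1 = 0) then (if x.2 = y.2 then 1 else 0)
    else if x.1 = 2 ∧ y.1 = 2 then (if x.2 = y.2 then (-1 : ℝ) else 0)
    else 0

/-- The bilinear form determined by the metric components. -/
def gBil {s : ℕ} (gm : Fin s → Fin s → ℝ) (X Y : BasisIdx s → ℝ) : ℝ :=
  ∑ p, ∑ q, X p * Gmat gm p q * Y q

/-- The quadrilinear extension of a component tensor to vectors. -/
def ext {s : ℕ} (F : BasisIdx s → BasisIdx s → BasisIdx s → BasisIdx s → ℝ)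
    (x y z w : BasisIdx s → ℝ) : ℝ :=
  ∑ p, ∑ q, ∑ r, ∑ t, x p * y q * z r * w t * F p q r t

/-- A (component-level) algebraic curvature tensor. -/
def IsACT {ι : Type*} (F : ι → ι → ι → ι → ℝ) : Prop :=
  (∀ x y z w, F x y z w = - F y x z w) ∧
  (∀ x y z w, F x y z w = F z w x y) ∧
  (∀ x y z w, F x y z w + F y z x w + F z x y w = 0)

/-- `R²_{abcd} = δ_{ad}δ_{bc} - δ_{ac}δ_{bd}`, constant sectional curvature `+1`. -/
def R2const (s : ℕ) : Fin s → Fin s → Fin s → Fin s → ℝ :=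
  fun a b c d =>
    (if a = d then (1 : ℝ) else 0) * (if b = c then (1 : ℝ) else 0) -
      (if a = c then (1 : ℝ) else 0) * (if b = d then (1 : ℝ) else 0)

/-- The tensor of Lemma 2.1: `R(U_a,U_b,U_c,U_d) = R¹_{abcd}`, components with
exactly one `T` index equal `R²_{abcd}` (replacing the `T` index by the
corresponding `U` index), all else zero. -/
def bigR {s : ℕ} (R1 R2 : Fin s → Fin s → Fin s → Fin s → ℝ) :
    BasisIdx s → BasisIdx s → BasisIdx s → BasisIdx s → ℝ :=
  fun x y z w =>
    if x.1 = 0 ∧ y.1 = 0 ∧ z.1 = 0 ∧ w.1 = 0 then R1 x.2 y.2 z.2 w.2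
    else if (x.1 = 2 ∧ y.1 = 0 ∧ z.1 = 0 ∧ w.1 = 0) ∨ (x.1 = 0 ∧ y.1 = 2 ∧ z.1 = 0 ∧ w.1 = 0) ∨
            (x.1 = 0 ∧ y.1 = 0 ∧ z.1 = 2 ∧ w.1 = 0) ∨ (x.1 = 0 ∧ y.1 = 0 ∧ z.1 = 0 ∧ w.1 = 2)
      then R2 x.2 y.2 z.2 w.2
    else 0
section Aux
variable {s : ℕ}

lemma ext_mid (F : BasisIdx s → BasisIdx s → BasisIdx s → BasisIdx s → ℝ)
    (y z : BasisIdx s → ℝ) (q r : BasisIdx s) :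
    ext F y (Pi.single q 1) (Pi.single r 1) z = ∑ p, ∑ t, y p * z t * F p q r t := by
  unfold ext
  simp only [Pi.single_apply, mul_ite, ite_mul, one_mul, zero_mul, mul_zero,
    Finset.sum_ite_irrel, Finset.sum_const_zero,
    Finset.sum_ite_eq', Finset.mem_univ, if_true, mul_one]

lemma ext_sub2 (F : BasisIdx s → BasisIdx s → BasisIdx s → BasisIdx s → ℝ)
    (y a b c z : BasisIdx s → ℝ) :
    ext F y (a - b) c z = ext F y a c z - ext F y b c z := by
  unfold ext
  simp only [Pi.sub_apply, sub_mul, mul_sub, ← Finset.sum_sub_distrib]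

lemma ext_sub3 (F : BasisIdx s → BasisIdx s → BasisIdx s → BasisIdx s → ℝ)
    (y a b c z : BasisIdx s → ℝ) :
    ext F y c (a - b) z = ext F y c a z - ext F y c b z := by
  unfold ext
  simp only [Pi.sub_apply, sub_mul, mul_sub, ← Finset.sum_sub_distrib]

/-- Jacobi operator of `T_{i1}` is zero. -/
lemma extT (i1 : Fin s) (y z : BasisIdx s → ℝ) :
    ext (bigR (fun _ _ _ _ => (0:ℝ)) (R2const s)) y (Tvec i1) (Tvec i1) z = 0 := by
  rw [Tvec, ext_mid]
  simp [bigR]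

/-- Jacobi operator of `U_{i1} - V_{i1}`. -/
lemma extUV (i1 : Fin s) (y z : BasisIdx s → ℝ) :
    ext (bigR (fun _ _ _ _ => (0:ℝ)) (R2const s)) y (Uvec i1 - Vvec i1) (Uvec i1 - Vvec i1) z
      = ∑ p, ∑ t, y p * z t *
          bigR (fun _ _ _ _ => (0:ℝ)) (R2const s) p ((0 : Fin 3), i1) ((0 : Fin 3), i1) t := by
  rw [ext_sub2, ext_sub3, ext_sub3, Uvec, Vvec, ext_mid, ext_mid, ext_mid, ext_mid]
  have h1 : ∀ p t : BasisIdx s,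
      bigR (fun _ _ _ _ => (0:ℝ)) (R2const s) p ((1 : Fin 3), i1) ((0 : Fin 3), i1) t = 0 := by
    intro p t; simp [bigR]
  have h2 : ∀ p t : BasisIdx s,
      bigR (fun _ _ _ _ => (0:ℝ)) (R2const s) p ((0 : Fin 3), i1) ((1 : Fin 3), i1) t = 0 := by
    intro p t; simp [bigR]
  have h3 : ∀ p t : BasisIdx s,
      bigR (fun _ _ _ _ => (0:ℝ)) (R2const s) p ((1 : Fin 3), i1) ((1 : Fin 3), i1) t = 0 := by
    intro p t; simp [bigR]
  simp only [h1, h2, h3, mul_zero, Finset.sum_const_zero, sub_zero]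

lemma gBil_single_right (gm : Fin s → Fin s → ℝ) (X : BasisIdx s → ℝ) (q : BasisIdx s) :
    gBil gm X (Pi.single q 1) = ∑ p, X p * Gmat gm p q := by
  unfold gBil
  rw [Finset.sum_comm]
  simp [Pi.single_apply, mul_ite, Finset.sum_ite_eq']

/-- nondegeneracy -/
lemma gBil_nondeg (gm : Fin s → Fin s → ℝ) (X : BasisIdx s → ℝ)
    (h : ∀ z, gBil gm X z = 0) : X = 0 := by
  have h0 : ∀ b, X ((0 : Fin 3), b) = 0 := by
    intro b
    have := h (Vvec b)
    rw [Vvec, gBil_single_right, Fintype.sum_prod_type, Fin.sum_univ_three] at this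
    simpa [Gmat, Finset.mul_sum, mul_ite, Finset.sum_ite_eq'] using this
  have h2 : ∀ b, X ((2 : Fin 3), b) = 0 := by
    intro b
    have := h (Tvec b)
    rw [Tvec, gBil_single_right, Fintype.sum_prod_type, Fin.sum_univ_three] at this
    simpa [Gmat, Finset.mul_sum, mul_ite, Finset.sum_ite_eq'] using this
  have h1 : ∀ b, X ((1 : Fin 3), b) = 0 := by
    intro b
    have := h (Uvec b)
    rw [Uvec, gBil_single_right, Fintype.sum_prod_type, Fin.sum_univ_three] at this
    simpa [Gmat, h0, Finset.mul_sum, mul_ite, Finset.sum_ite_eq'] using this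
  funext p
  obtain ⟨c, b⟩ := p
  fin_cases c
  · exact h0 b
  · exact h1 b
  · exact h2 b

/-- The Jacobi operator of `U_{i1} - V_{i1}` as a linear map. -/
def Jmap (s : ℕ) (i1 : Fin s) : Module.End ℝ (BasisIdx s → ℝ) where
  toFun y := fun p =>
    if p.1 = 1 then y ((2 : Fin 3), p.2) - (if p.2 = i1 then y ((2 : Fin 3), i1) else 0)
    else if p.1 = 2 then
      (if p.2 = i1 then y ((0 : Fin 3), i1) else 0) - y ((0 : Fin 3), p.2)
    else 0
  map_add' y z := by funext p; dsimp only [Pi.add_apply]; split_ifs <;> ring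
  map_smul' c y := by
    funext p; dsimp only [Pi.smul_apply, RingHom.id_apply, smul_eq_mul]
    split_ifs <;> ring

lemma Jmap_spec (gm : Fin s → Fin s → ℝ) (i1 : Fin s) (y z : BasisIdx s → ℝ) :
    gBil gm (Jmap s i1 y) z =
      ext (bigR (fun _ _ _ _ => (0:ℝ)) (R2const s)) y (Uvec i1 - Vvec i1)
        (Uvec i1 - Vvec i1) z := by
  rw [extUV]
  unfold gBil
  conv_lhs => rw [Finset.sum_comm]
  conv_rhs => rw [Finset.sum_comm]
  refine Finset.sum_congr rfl fun q _ => ?_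
  have : ∀ p : BasisIdx s, y p * z q *
      bigR (fun _ _ _ _ => (0:ℝ)) (R2const s) p ((0 : Fin 3), i1) ((0 : Fin 3), i1) q
      = y p * bigR (fun _ _ _ _ => (0:ℝ)) (R2const s) p ((0 : Fin 3), i1) ((0 : Fin 3), i1) q
        * z q := by intro p; ring
  simp only [this]
  rw [← Finset.sum_mul, ← Finset.sum_mul]
  congr 1
  obtain ⟨c, b⟩ := q
  rw [Fintype.sum_prod_type, Fintype.sum_prod_type, Fin.sum_univ_three, Fin.sum_univ_three]
  fin_cases c <;>
    simp [Jmap, Gmat, bigR, R2const, mul_ite, ite_mul, mul_sub, sub_mul,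
      Finset.sum_sub_distrib, Finset.sum_ite_eq', eq_comm]

end Aux
/-- with `R¹ = 0`, `R²` the constant curvature `+1` tensor, and
`g_{11} = 1` (so that `U_1 - V_1` is unit timelike, like `T_1`), the Jacobi
operator of `T_1` vanishes while that of `U_1 - V_1` does not; both are unit
timelike, so their Jacobi operators have different Jordan normal forms
(are not conjugate) and `R` is not timelike Jordan Osserman.
Here `i1` denotes the first index (`1` in the paper's numbering). -/
theorem stmt6 (s : ℕ) (hs : 2 ≤ s) (i1 : Fin s) (hi1 : (i1 : ℕ) = 0)
    (gm : Fin s → Fin s → ℝ)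
    (hgm : ∀ a b, gm a b = gm b a) (h11 : gm i1 i1 = 1) :
    gBil gm (Tvec i1) (Tvec i1) = -1 ∧
    gBil gm (Uvec i1 - Vvec i1) (Uvec i1 - Vvec i1) = -1 ∧
    (∀ J : Module.End ℝ (BasisIdx s → ℝ),
       (∀ y z, gBil gm (J y) z =
          ext (bigR (fun _ _ _ _ => 0) (R2const s)) y (Tvec i1) (Tvec i1) z) → J = 0) ∧
    (∀ J : Module.End ℝ (BasisIdx s → ℝ),
       (∀ y z, gBil gm (J y) z =
          ext (bigR (fun _ _ _ _ => 0) (R2const s)) y (Uvec i1 - Vvec i1)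
            (Uvec i1 - Vvec i1) z) → J ≠ 0) ∧
    ¬ (∀ (x x' : BasisIdx s → ℝ) (J J' : Module.End ℝ (BasisIdx s → ℝ)),
        gBil gm x x = -1 → gBil gm x' x' = -1 →
        (∀ y z, gBil gm (J y) z = ext (bigR (fun _ _ _ _ => 0) (R2const s)) y x x z) →
        (∀ y z, gBil gm (J' y) z = ext (bigR (fun _ _ _ _ => 0) (R2const s)) y x' x' z) →
        ∃ P : (BasisIdx s → ℝ) ≃ₗ[ℝ] (BasisIdx s → ℝ),
          J' = P.toLinearMap ∘ₗ J ∘ₗ P.symm.toLinearMap) := by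
  have part1 : gBil gm (Tvec i1) (Tvec i1) = -1 := by
    rw [Tvec, gBil_single_right, Fintype.sum_prod_type, Fin.sum_univ_three]
    simp [Pi.single_apply, Prod.mk.injEq, ite_mul, Finset.sum_ite_eq', Gmat]
  have part2 : gBil gm (Uvec i1 - Vvec i1) (Uvec i1 - Vvec i1) = -1 := by
    unfold gBil
    rw [Fintype.sum_prod_type, Fin.sum_univ_three]
    simp [Uvec, Vvec, Pi.sub_apply, Pi.single_apply, Prod.mk.injEq, sub_mul, mul_sub,
      ite_mul, mul_ite, Fintype.sum_prod_type, Fin.sum_univ_three,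
      Finset.sum_sub_distrib, Finset.sum_ite_irrel, Finset.sum_ite_eq', Gmat, h11]
  have part3 : ∀ J : Module.End ℝ (BasisIdx s → ℝ),
      (∀ y z, gBil gm (J y) z =
        ext (bigR (fun _ _ _ _ => 0) (R2const s)) y (Tvec i1) (Tvec i1) z) → J = 0 := by
    intro J hJ
    have hy : ∀ y, J y = 0 := fun y =>
      gBil_nondeg gm _ (fun z => by rw [hJ]; exact extT i1 y z)
    exact LinearMap.ext fun y => hy y
  have part4 : ∀ J : Module.End ℝ (BasisIdx s → ℝ),
      (∀ y z, gBil gm (J y) z =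
        ext (bigR (fun _ _ _ _ => 0) (R2const s)) y (Uvec i1 - Vvec i1)
          (Uvec i1 - Vvec i1) z) → J ≠ 0 := by
    intro J hJ h0
    have hslt : (1 : ℕ) < s := by omega
    set a2 : Fin s := ⟨1, hslt⟩ with ha2
    have hne : a2 ≠ i1 := by
      intro h; rw [Fin.ext_iff] at h; simp [ha2, hi1] at h
    have key := hJ (Tvec a2) (Uvec a2)
    rw [extUV] at key
    rw [h0] at key
    simp only [LinearMap.zero_apply] at key
    have lhs0 : gBil gm (0 : BasisIdx s → ℝ) (Uvec a2) = 0 := by simp [gBil]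
    rw [lhs0] at key
    have : (0:ℝ) = 1 := by
      rw [key]
      simp [Tvec, Uvec, Pi.single_apply, Prod.mk.injEq, ite_mul, mul_ite,
        Fintype.sum_prod_type, Fin.sum_univ_three, Finset.sum_ite_irrel,
        Finset.sum_ite_eq', bigR, R2const, hne, Ne.symm hne]
    norm_num at this
  refine ⟨part1, part2, part3, part4, ?_⟩
  intro H
  have hJ0 : ∀ y z, gBil gm ((0 : Module.End ℝ (BasisIdx s → ℝ)) y) z =
      ext (bigR (fun _ _ _ _ => 0) (R2const s)) y (Tvec i1) (Tvec i1) z := by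
    intro y z
    rw [extT]
    simp [gBil]
  obtain ⟨P, hP⟩ := H (Tvec i1) (Uvec i1 - Vvec i1) 0 (Jmap s i1) part1 part2 hJ0
    (Jmap_spec gm i1)
  have : Jmap s i1 = 0 := by
    rw [hP]; ext y; simp
  exact part4 (Jmap s i1) (Jmap_spec gm i1) this
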